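/- Under the stated assumptions, for every α > (log 2)^{−1/2}, the double integral ∫∫_{Ω×Ω} |x−y|^{−1} e^{−α·ϑ(log(1/|x−y|))} µ(dx) µ(dy) is finite. -/

import Mathlib

open MeasureTheory Filter Real

/-- The affine contraction used in the construction of the Cantor set: the left
(`b = false`) or right (`b = true`) branch with gap parameter `α`. -/
noncomputable def cantorBranch (α : ℝ) (b : Bool) (x : ℝ) : ℝ :=
  (1 - α) / 2 * x + if b then (1 + α) / 2 else 0

/-- The level-`n` basic interval of the Cantor construction indexed by `s : Fin n → Bool`,
with gap parameters `a 1, …, a n`. -/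
def cantorIntv : (a : ℕ → ℝ) → (n : ℕ) → (Fin n → Bool) → Set ℝ
  | _, 0, _ => Set.Icc 0 1
  | a, n + 1, s =>
      cantorBranch (a 1) (s 0) '' cantorIntv (fun k => a (k + 1)) n (fun i => s i.succ)

/-- The level-`n` approximation `A(a₁,…,a_n)` of the Cantor set. -/
def cantorApprox (a : ℕ → ℝ) (n : ℕ) : Set ℝ := ⋃ s : Fin n → Bool, cantorIntv a n s

/-- The Cantor set `Ω := ⋂_{n ≥ 1} A(a₁,…,a_n)`. -/
def cantorSetOf (a : ℕ → ℝ) : Set ℝ := ⋂ (n : ℕ) (_ : 1 ≤ n), cantorApprox a n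

namespace CE

/-- hypothesis bundle -/
def OK (a : ℕ → ℝ) : Prop := ∀ k : ℕ, 1 ≤ k → a k ∈ Set.Ioo (0 : ℝ) 1

lemma OK.shift {a : ℕ → ℝ} (h : OK a) : OK (fun k => a (k + 1)) := by
  intro k hk
  exact h (k + 1) (by omega)

noncomputable def len (a : ℕ → ℝ) (n : ℕ) : ℝ := ∏ i ∈ Finset.range n, (1 - a (i + 1)) / 2

lemma len_zero (a : ℕ → ℝ) : len a 0 = 1 := by simp [len]

lemma len_succ (a : ℕ → ℝ) (n : ℕ) :
    len a (n + 1) = (1 - a 1) / 2 * len (fun k => a (k + 1)) n := by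
  rw [len, Finset.prod_range_succ']
  simp [len, mul_comm]

lemma len_pos {a : ℕ → ℝ} (h : OK a) (n : ℕ) : 0 < len a n := by
  apply Finset.prod_pos
  intro i _
  have := h (i + 1) (by omega)
  have := this.2
  linarith

lemma len_le_half_pow {a : ℕ → ℝ} (h : OK a) (n : ℕ) : len a n ≤ (1 / 2) ^ n := by
  have : (1/2:ℝ)^n = ∏ _i ∈ Finset.range n, (1/2:ℝ) := by
    rw [Finset.prod_const, Finset.card_range]
  rw [len, this]
  apply Finset.prod_le_prod
  · intro i _
    have := (h (i + 1) (by omega)).2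
    linarith
  · intro i _
    have := (h (i + 1) (by omega)).1
    linarith

lemma len_le_one {a : ℕ → ℝ} (h : OK a) (n : ℕ) : len a n ≤ 1 := by
  calc len a n ≤ (1/2)^n := len_le_half_pow h n
  _ ≤ 1 := by
      apply pow_le_one₀ <;> norm_num

lemma cantorIntv_zero (a : ℕ → ℝ) (s : Fin 0 → Bool) : cantorIntv a 0 s = Set.Icc 0 1 := rfl

lemma cantorIntv_succ (a : ℕ → ℝ) (n : ℕ) (s : Fin (n+1) → Bool) :
    cantorIntv a (n+1) s
      = cantorBranch (a 1) (s 0) '' cantorIntv (fun k => a (k + 1)) n (fun i => s i.succ) := rfl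

lemma branch_image_Icc {α : ℝ} (hα : 0 < (1 - α)/2) (b : Bool) (c d : ℝ) :
    cantorBranch α b '' Set.Icc c d
      = Set.Icc ((1 - α)/2 * c + (if b then (1 + α)/2 else 0))
          ((1 - α)/2 * d + (if b then (1 + α)/2 else 0)) := by
  have := Set.image_affine_Icc' (a := (1 - α)/2) hα (if b then (1 + α)/2 else (0:ℝ)) c d
  have hfun : cantorBranch α b = fun x => (1 - α) / 2 * x + if b then (1 + α) / 2 else 0 := rfl
  rw [hfun]
  simpa using this

/-- Every basic interval is a closed interval `[c, c + len]` inside `[0,1]`. -/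
lemma exists_Icc : ∀ (a : ℕ → ℝ), OK a → ∀ (n : ℕ) (s : Fin n → Bool),
    ∃ c : ℝ, 0 ≤ c ∧ c + len a n ≤ 1 ∧ cantorIntv a n s = Set.Icc c (c + len a n) := by
  intro a ha n
  induction n generalizing a with
  | zero => intro s; exact ⟨0, le_rfl, by simp [len_zero], by simp [cantorIntv_zero, len_zero]⟩
  | succ n ih =>
    intro s
    obtain ⟨c, hc0, hc1, hI⟩ := ih _ ha.shift (fun i => s i.succ)
    have h1 := ha 1 le_rfl
    have hr : 0 < (1 - a 1)/2 := by have := h1.2; linarith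
    refine ⟨(1 - a 1)/2 * c + (if s 0 then (1 + a 1)/2 else 0), ?_, ?_, ?_⟩
    · have : (0:ℝ) ≤ (if s 0 then (1 + a 1)/2 else 0) := by
        cases s 0 <;> simp <;> linarith [h1.1]
      nlinarith
    · have hlen := len_pos ha.shift n
      have hoff : (if s 0 then (1 + a 1)/2 else (0:ℝ)) ≤ (1 + a 1)/2 := by
        cases s 0 <;> simp <;> linarith [h1.1]
      rw [len_succ]
      nlinarith
    · rw [cantorIntv_succ, hI, branch_image_Icc hr]
      have h2 : (1 - a 1)/2 * (c + len (fun k => a (k+1)) n) + (if s 0 then (1 + a 1)/2 else (0:ℝ))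
          = ((1 - a 1)/2 * c + (if s 0 then (1 + a 1)/2 else (0:ℝ))) + len a (n+1) := by
        rw [len_succ]; ring
      rw [h2]

lemma subset_Icc01 {a : ℕ → ℝ} (ha : OK a) {n : ℕ} {s : Fin n → Bool} :
    cantorIntv a n s ⊆ Set.Icc 0 1 := by
  obtain ⟨c, hc0, hc1, hI⟩ := exists_Icc a ha n s
  rw [hI]
  exact Set.Icc_subset_Icc hc0 hc1 |>.trans (by simp)

lemma measurable_cantorIntv {a : ℕ → ℝ} (ha : OK a) (n : ℕ) (s : Fin n → Bool) :
    MeasurableSet (cantorIntv a n s) := by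
  obtain ⟨c, _, _, hI⟩ := exists_Icc a ha n s
  rw [hI]; exact measurableSet_Icc

lemma dist_le_len {a : ℕ → ℝ} (ha : OK a) {n : ℕ} {s : Fin n → Bool} {x y : ℝ}
    (hx : x ∈ cantorIntv a n s) (hy : y ∈ cantorIntv a n s) : |x - y| ≤ len a n := by
  obtain ⟨c, _, _, hI⟩ := exists_Icc a ha n s
  rw [hI] at hx hy
  rw [abs_sub_le_iff]
  constructor <;> [skip; skip] <;> (simp only [Set.mem_Icc] at hx hy; linarith [hx.1, hx.2, hy.1, hy.2])

end CE

namespace CE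

lemma parent_subset : ∀ (a : ℕ → ℝ), OK a → ∀ (n : ℕ) (u : Fin (n+1) → Bool),
    cantorIntv a (n+1) u ⊆ cantorIntv a n (fun i => u i.castSucc) := by
  intro a ha n
  induction n generalizing a with
  | zero =>
    intro u
    rw [cantorIntv_zero]
    exact subset_Icc01 ha
  | succ n ih =>
    intro u
    have e1 : cantorIntv a (n+1+1) u
        = cantorBranch (a 1) (u 0) '' cantorIntv (fun k => a (k+1)) (n+1) (fun i => u i.succ) := rfl
    have e2 : cantorIntv a (n+1) (fun i : Fin (n+1) => u i.castSucc)
        = cantorBranch (a 1) (u 0) '' cantorIntv (fun k => a (k+1)) n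
            (fun i : Fin n => u i.succ.castSucc) := by
      rw [cantorIntv_succ, Fin.castSucc_zero]
    rw [e1, e2]
    apply Set.image_mono
    have hfun : (fun i : Fin n => u i.succ.castSucc) = (fun i : Fin n => (fun j : Fin (n+1) => u j.succ) i.castSucc) := by
      funext i
      rw [← Fin.succ_castSucc]
    rw [hfun]
    exact ih _ ha.shift (fun i => u i.succ)

lemma branch_eq_iff {α x y : ℝ} (h : 0 < (1-α)/2) {b : Bool} :
    cantorBranch α b x = cantorBranch α b y ↔ x = y := by
  constructor
  · intro hxy
    simp only [cantorBranch] at hxy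
    have h2 : (1-α)/2 * x = (1-α)/2 * y := add_right_cancel hxy
    exact mul_left_cancel₀ (ne_of_gt h) h2
  · intro h; rw [h]

lemma disjoint_cantorIntv : ∀ (a : ℕ → ℝ), OK a → ∀ (n : ℕ) (u v : Fin n → Bool),
    u ≠ v → Disjoint (cantorIntv a n u) (cantorIntv a n v) := by
  intro a ha n
  induction n generalizing a with
  | zero => intro u v huv; exact absurd (Subsingleton.elim u v) huv
  | succ n ih =>
    intro u v huv
    rw [Set.disjoint_left]
    intro x hxu hxv
    rw [cantorIntv_succ] at hxu hxv
    obtain ⟨xu, hxu', hxu''⟩ := hxu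
    obtain ⟨xv, hxv', hxv''⟩ := hxv
    have h1 := ha 1 le_rfl
    have hr : 0 < (1 - a 1)/2 := by have := h1.2; linarith
    have hxu01 := subset_Icc01 ha.shift hxu'
    have hxv01 := subset_Icc01 ha.shift hxv'
    simp only [Set.mem_Icc] at hxu01 hxv01
    by_cases h0 : u 0 = v 0
    · have hsucc : (fun i : Fin n => u i.succ) ≠ (fun i : Fin n => v i.succ) := by
        intro hs
        apply huv
        funext i
        rcases Fin.eq_zero_or_eq_succ i with h | ⟨j, rfl⟩
        · rw [h]; exact h0
        · exact congrFun hs j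
      have heq : xu = xv := by
        rw [← hxv''] at hxu''
        rw [h0] at hxu''
        exact (branch_eq_iff hr).1 hxu''
      have := ih _ ha.shift _ _ hsucc
      rw [Set.disjoint_left] at this
      exact this hxu' (heq ▸ hxv')
    · have hval : cantorBranch (a 1) (u 0) xu = cantorBranch (a 1) (v 0) xv := by
        rw [hxu'', hxv'']
      simp only [cantorBranch] at hval
      have ha1 := h1.1
      cases hu0 : u 0 <;> cases hv0 : v 0 <;> rw [hu0, hv0] at hval <;> simp at hval h0 ⊢
      · exact h0 (hu0.trans hv0.symm)
      · nlinarith [hxu01.2, hxv01.1]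
      · nlinarith [hxu01.1, hxv01.2]
      · exact h0 (hu0.trans hv0.symm)

lemma gap_lemma : ∀ (a : ℕ → ℝ), OK a → ∀ (n : ℕ) (u v : Fin (n+1) → Bool),
    (∀ i : Fin n, u i.castSucc = v i.castSucc) → u (Fin.last n) ≠ v (Fin.last n) →
    ∀ x ∈ cantorIntv a (n+1) u, ∀ y ∈ cantorIntv a (n+1) v,
      a (n+1) * len a n ≤ |x - y| := by
  intro a ha n
  induction n generalizing a with
  | zero =>
    intro u v hcs hlast x hx y hy
    rw [cantorIntv_succ] at hx hy
    obtain ⟨x', hx', rfl⟩ := hx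
    obtain ⟨y', hy', rfl⟩ := hy
    have hx01 : x' ∈ Set.Icc (0:ℝ) 1 := hx'
    have hy01 : y' ∈ Set.Icc (0:ℝ) 1 := hy'
    simp only [Set.mem_Icc] at hx01 hy01
    have h1 := ha 1 le_rfl
    rw [len_zero, mul_one]
    have hl0 : (Fin.last 0 : Fin 1) = 0 := rfl
    rw [hl0] at hlast
    simp only [cantorBranch]
    cases hu0 : u 0 <;> cases hv0 : v 0 <;> rw [hu0, hv0] at hlast <;> simp at hlast ⊢
    · rw [abs_sub_comm]
      rw [abs_of_nonneg (by nlinarith [h1.1, h1.2])]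
      nlinarith [h1.1, h1.2]
    · rw [abs_of_nonneg (by nlinarith [h1.1, h1.2])]
      nlinarith [h1.1, h1.2]
  | succ n ih =>
    intro u v hcs hlast x hx y hy
    rw [cantorIntv_succ] at hx hy
    obtain ⟨x', hx', rfl⟩ := hx
    obtain ⟨y', hy', rfl⟩ := hy
    have h1 := ha 1 le_rfl
    have hr : 0 < (1 - a 1)/2 := by have := h1.2; linarith
    have h0 : u 0 = v 0 := by
      have := hcs 0
      simpa using this
    have hkey : a (n+2) * len (fun k => a (k+1)) n ≤ |x' - y'| := by
      apply ih _ ha.shift (fun i => u i.succ) (fun i => v i.succ)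
        (fun i => by have h := hcs i.succ; rw [← Fin.succ_castSucc] at h; exact h)
        (by simpa [Fin.succ_last] using hlast) _ hx' _ hy'
    have habs : |cantorBranch (a 1) (u 0) x' - cantorBranch (a 1) (v 0) y'|
        = (1 - a 1)/2 * |x' - y'| := by
      rw [← h0]
      simp only [cantorBranch]
      have : (1 - a 1) / 2 * x' + (if u 0 then (1 + a 1)/2 else 0)
          - ((1 - a 1) / 2 * y' + (if u 0 then (1 + a 1)/2 else 0))
          = (1 - a 1)/2 * (x' - y') := by ring
      rw [this, abs_mul, abs_of_nonneg hr.le]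
    rw [habs, len_succ]
    calc a (n+1+1) * ((1 - a 1)/2 * len (fun k => a (k+1)) n)
        = (1 - a 1)/2 * (a (n+2) * len (fun k => a (k+1)) n) := by ring
      _ ≤ (1 - a 1)/2 * |x' - y'| := by
          apply mul_le_mul_of_nonneg_left hkey hr.le

end CE

namespace CE

lemma mem_approx {a : ℕ → ℝ} {x : ℝ} (hx : x ∈ cantorSetOf a) (n : ℕ) (hn : 1 ≤ n) :
    ∃ s : Fin n → Bool, x ∈ cantorIntv a n s := by
  have : x ∈ cantorApprox a n := by
    simp only [cantorSetOf, Set.mem_iInter] at hx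
    exact hx n hn
  simpa [cantorApprox, Set.mem_iUnion] using this

lemma covering {a : ℕ → ℝ} (ha : OK a) {x y : ℝ}
    (hx : x ∈ cantorSetOf a) (hy : y ∈ cantorSetOf a) (hne : x ≠ y) :
    ∃ (n : ℕ) (t : Fin n → Bool) (b : Bool),
      x ∈ cantorIntv a (n+1) (Fin.snoc t b) ∧ y ∈ cantorIntv a (n+1) (Fin.snoc t (!b)) := by
  classical
  set P : ℕ → Prop := fun n => ∃ t : Fin n → Bool, x ∈ cantorIntv a n t ∧ y ∈ cantorIntv a n t
    with hP
  obtain ⟨sx1, hx1⟩ := mem_approx hx 1 le_rfl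
  obtain ⟨sy1, hy1⟩ := mem_approx hy 1 le_rfl
  have hx01 : x ∈ Set.Icc (0:ℝ) 1 := subset_Icc01 ha hx1
  have hy01 : y ∈ Set.Icc (0:ℝ) 1 := subset_Icc01 ha hy1
  have hP0 : P 0 := ⟨fun i => i.elim0, hx01, hy01⟩
  have habs : 0 < |x - y| := abs_pos.mpr (sub_ne_zero.mpr hne)
  have hex : ∃ n, ¬ P n := by
    obtain ⟨n, hn⟩ := exists_pow_lt_of_lt_one habs (show (1:ℝ)/2 < 1 by norm_num)
    refine ⟨n, fun ⟨t, hxt, hyt⟩ => ?_⟩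
    have h1 := dist_le_len ha hxt hyt
    have h2 := len_le_half_pow ha n
    linarith
  set N := Nat.find hex with hN
  have hNP : ¬ P N := Nat.find_spec hex
  have hN0 : N ≠ 0 := fun h => hNP (h ▸ hP0)
  obtain ⟨n, hn⟩ : ∃ n, N = n + 1 := ⟨N - 1, by omega⟩
  have hPn : P n := by
    by_contra h
    exact (Nat.find_min hex (show n < N by omega)) h
  obtain ⟨t, hxt, hyt⟩ := hPn
  have hNP' : ¬ P (n + 1) := hn ▸ hNP
  obtain ⟨su, hxsu⟩ := mem_approx hx (n+1) (by omega)
  obtain ⟨sv, hysv⟩ := mem_approx hy (n+1) (by omega)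
  have hut : (fun i : Fin n => su i.castSucc) = t := by
    by_contra h
    have hd := disjoint_cantorIntv a ha n _ _ h
    rw [Set.disjoint_left] at hd
    exact hd (parent_subset a ha n su hxsu) hxt
  have hvt : (fun i : Fin n => sv i.castSucc) = t := by
    by_contra h
    have hd := disjoint_cantorIntv a ha n _ _ h
    rw [Set.disjoint_left] at hd
    exact hd (parent_subset a ha n sv hysv) hyt
  have huv : su ≠ sv := by
    rintro rfl
    exact hNP' ⟨su, hxsu, hysv⟩
  have hlast : su (Fin.last n) ≠ sv (Fin.last n) := by
    intro h
    apply huv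
    funext i
    induction i using Fin.lastCases with
    | last => exact h
    | cast j => exact (congrFun hut j).trans (congrFun hvt j).symm
  have hsu : Fin.snoc t (su (Fin.last n)) = su := by
    funext i
    induction i using Fin.lastCases with
    | last => simp
    | cast j =>
      rw [Fin.snoc_castSucc]
      exact (congrFun hut j).symm
  have hvlast : sv (Fin.last n) = !(su (Fin.last n)) := by
    cases h1 : su (Fin.last n) <;> cases h2 : sv (Fin.last n) <;> simp_all
  have hsv : Fin.snoc t (!(su (Fin.last n))) = sv := by
    funext i
    induction i using Fin.lastCases with
    | last => simp [hvlast]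
    | cast j =>
      rw [Fin.snoc_castSucc]
      exact (congrFun hvt j).symm
  refine ⟨n, t, su (Fin.last n), ?_, ?_⟩
  · rw [hsu]; exact hxsu
  · rw [hsv]; exact hysv

end CE

namespace CE

lemma half_le_one_sub_exp {t : ℝ} (h0 : 0 ≤ t) (h1 : t ≤ 1) : t/2 ≤ 1 - Real.exp (-t) := by
  have h2 : t + 1 ≤ Real.exp t := Real.add_one_le_exp t
  have h4 : (0:ℝ) < Real.exp (-t) := Real.exp_pos _
  have h5 : Real.exp (-t) * (t + 1) ≤ 1 := by
    have := mul_le_mul_of_nonneg_left h2 h4.le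
    rwa [← Real.exp_add, neg_add_cancel, Real.exp_zero] at this
  nlinarith [h5, h4.le, sq_nonneg t]

section Slow

variable {ϑ L : ℝ → ℝ}

lemma L_pos (hϑ_nonneg : ∀ u, 0 ≤ u → 0 ≤ ϑ u)
    (hϑL : ∀ u : ℝ, 1 ≤ u → ϑ u = Real.sqrt u * L u)
    (hL_slow : ∀ c : ℝ, 0 < c → Tendsto (fun u => L (c * u) / L u) atTop (nhds 1)) :
    ∀ᶠ u : ℝ in atTop, 0 < L u := by
  have h2 := (hL_slow 2 two_pos).eventually_ne one_ne_zero
  filter_upwards [h2, eventually_ge_atTop (1:ℝ)] with u hne hu1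
  have hL0 : 0 ≤ L u := by
    by_contra h
    push_neg at h
    have hs : 0 < Real.sqrt u := Real.sqrt_pos.mpr (by linarith)
    have := hϑ_nonneg u (by linarith)
    rw [hϑL u hu1] at this
    nlinarith
  rcases hL0.lt_or_eq with h | h
  · exact h
  · exfalso; apply hne; rw [← h, div_zero]

/-- Main ratio estimate: for `0 < ρ < 1` and `c > 0`,
eventually `ρ * (√c * ϑ u) ≤ ϑ (c * u)`. -/
lemma theta_ratio (hϑ_nonneg : ∀ u, 0 ≤ u → 0 ≤ ϑ u)
    (hϑL : ∀ u : ℝ, 1 ≤ u → ϑ u = Real.sqrt u * L u)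
    (hL_slow : ∀ c : ℝ, 0 < c → Tendsto (fun u => L (c * u) / L u) atTop (nhds 1))
    {c ρ : ℝ} (hc : 0 < c) (hρ1 : ρ < 1) :
    ∀ᶠ u : ℝ in atTop, ρ * (Real.sqrt c * ϑ u) ≤ ϑ (c * u) := by
  have hrat := (hL_slow c hc).eventually (eventually_gt_nhds hρ1)
  have hcu : Tendsto (fun u : ℝ => c * u) atTop atTop :=
    Tendsto.const_mul_atTop hc tendsto_id
  filter_upwards [hrat, eventually_ge_atTop (1:ℝ), hcu.eventually_ge_atTop (1:ℝ),
    L_pos hϑ_nonneg hϑL hL_slow] with u hr hu1 hcu1 hLpos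
  have hu0 : (0:ℝ) ≤ u := by linarith
  have hLcu : ρ * L u ≤ L (c * u) := by
    have := (le_div_iff₀ hLpos).mp hr.le
    linarith
  have h1 : ϑ (c * u) = Real.sqrt c * Real.sqrt u * L (c * u) := by
    rw [hϑL (c * u) hcu1, Real.sqrt_mul hc.le]
  have h2 : ϑ u = Real.sqrt u * L u := hϑL u hu1
  rw [h1, h2]
  have hsc : (0:ℝ) ≤ Real.sqrt c := Real.sqrt_nonneg c
  have hsu : (0:ℝ) ≤ Real.sqrt u := Real.sqrt_nonneg u
  calc ρ * (Real.sqrt c * (Real.sqrt u * L u))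
      = Real.sqrt c * Real.sqrt u * (ρ * L u) := by ring
    _ ≤ Real.sqrt c * Real.sqrt u * L (c * u) := by
        apply mul_le_mul_of_nonneg_left hLcu (by positivity)

lemma exists_u0 (hϑ_mono : MonotoneOn ϑ (Set.Ici 0))
    (hϑ_nonneg : ∀ u, 0 ≤ u → 0 ≤ ϑ u)
    (hϑL : ∀ u : ℝ, 1 ≤ u → ϑ u = Real.sqrt u * L u)
    (hL_slow : ∀ c : ℝ, 0 < c → Tendsto (fun u => L (c * u) / L u) atTop (nhds 1)) :
    ∃ u₀ : ℝ, 1 ≤ u₀ ∧ 0 < ϑ u₀ ∧ ∀ u, u₀ ≤ u → (5/4) * ϑ u ≤ ϑ (2 * u) := by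
  have hdbl := theta_ratio hϑ_nonneg hϑL hL_slow (c := 2) (ρ := 9/10) two_pos (by norm_num)
  have hsqrt2 : (25/18 : ℝ) ≤ Real.sqrt 2 := by
    rw [show (25/18:ℝ) = Real.sqrt ((25/18)^2) from (Real.sqrt_sq (by norm_num)).symm]
    apply Real.sqrt_le_sqrt
    norm_num
  have hpos : ∀ᶠ u : ℝ in atTop, 0 < ϑ u := by
    filter_upwards [L_pos hϑ_nonneg hϑL hL_slow, eventually_ge_atTop (1:ℝ)] with u hL hu1
    rw [hϑL u hu1]
    have : 0 < Real.sqrt u := Real.sqrt_pos.mpr (by linarith)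
    positivity
  obtain ⟨u₀, hu₀⟩ := eventually_atTop.mp
    ((hdbl.and hpos).and (eventually_ge_atTop (1:ℝ)))
  refine ⟨u₀, (hu₀ u₀ le_rfl).2, (hu₀ u₀ le_rfl).1.2, fun u hu => ?_⟩
  obtain ⟨⟨h1, h2⟩, _⟩ := hu₀ u hu
  have hnn : 0 ≤ ϑ u := le_of_lt h2
  nlinarith [h1, hsqrt2, hnn]

lemma growth (hϑ_mono : MonotoneOn ϑ (Set.Ici 0))
    {u₀ : ℝ} (hu₀1 : 1 ≤ u₀) (hu₀p : 0 < ϑ u₀)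
    (hdbl : ∀ u, u₀ ≤ u → (5/4) * ϑ u ≤ ϑ (2 * u))
    (M : ℝ) (hM : 0 ≤ M) :
    ∀ᶠ n : ℕ in atTop, M * Real.log ((n:ℝ) + 1) ≤ ϑ (n:ℝ) := by
  classical
  have hu₀0 : (0:ℝ) < u₀ := lt_of_lt_of_le one_pos hu₀1
  have hiter : ∀ k : ℕ, (5/4:ℝ)^k * ϑ u₀ ≤ ϑ (2^k * u₀) := by
    intro k
    induction k with
    | zero => simp
    | succ k ih =>
      have h1 : u₀ ≤ 2^k * u₀ := le_mul_of_one_le_left hu₀0.le (one_le_pow₀ (by norm_num))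
      calc (5/4:ℝ)^(k+1) * ϑ u₀ = (5/4) * ((5/4:ℝ)^k * ϑ u₀) := by ring
        _ ≤ (5/4) * ϑ (2^k * u₀) := by linarith [mul_le_mul_of_nonneg_left ih (by norm_num : (0:ℝ) ≤ 5/4)]
        _ ≤ ϑ (2 * (2^k * u₀)) := hdbl _ h1
        _ = ϑ (2^(k+1) * u₀) := by ring_nf
  have hgeo : ∀ᶠ k : ℕ in atTop,
      M * (((k:ℝ)+2) * Real.log 2 + Real.log u₀) ≤ (5/4:ℝ)^k * ϑ u₀ := by
    have t1 : Tendsto (fun k : ℕ => (k:ℝ) * (4/5:ℝ)^k) atTop (nhds 0) := by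
      have := (summable_pow_mul_geometric_of_norm_lt_one 1
        (r := (4/5:ℝ)) (by rw [Real.norm_eq_abs]; rw [abs_of_pos] <;> norm_num)).tendsto_atTop_zero
      simpa using this
    have t2 : Tendsto (fun k : ℕ => (4/5:ℝ)^k) atTop (nhds 0) :=
      tendsto_pow_atTop_nhds_zero_of_lt_one (by norm_num) (by norm_num)
    have t3 : Tendsto (fun k : ℕ =>
        (M * Real.log 2) * ((k:ℝ) * (4/5:ℝ)^k)
          + (M * (2 * Real.log 2 + Real.log u₀)) * (4/5:ℝ)^k) atTop (nhds 0) := by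
      have := ((t1.const_mul (M * Real.log 2)).add
        (t2.const_mul (M * (2 * Real.log 2 + Real.log u₀))))
      simpa using this
    have t4 : Tendsto (fun k : ℕ =>
        (M * (((k:ℝ)+2) * Real.log 2 + Real.log u₀)) * (4/5:ℝ)^k) atTop (nhds 0) := by
      apply t3.congr
      intro k
      ring
    have := t4.eventually_lt_const hu₀p
    filter_upwards [this] with k hk
    have hpow : (0:ℝ) < (4/5:ℝ)^k := by positivity
    have hprod : (4/5:ℝ)^k * (5/4:ℝ)^k = 1 := by
      rw [← mul_pow]; norm_num
    nlinarith [hk, hpow, hprod, pow_pos (show (0:ℝ) < 5/4 by norm_num) k]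
  obtain ⟨k₀, hk₀⟩ := eventually_atTop.mp hgeo
  obtain ⟨N₁, hN₁⟩ := exists_nat_ge ((2:ℝ)^k₀ * u₀)
  rw [eventually_atTop]
  refine ⟨max N₁ 1, fun n hn => ?_⟩
  have hn1 : 1 ≤ n := le_trans (le_max_right _ _) hn
  have hnN : (2:ℝ)^k₀ * u₀ ≤ (n:ℝ) :=
    le_trans hN₁ (Nat.cast_le.2 (le_trans (le_max_left _ _) hn))
  set Q : ℕ → Prop := fun k => (2:ℝ)^k * u₀ ≤ (n:ℝ) with hQ
  have hcast : ∀ k : ℕ, (k:ℝ) < (2:ℝ)^k := by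
    intro k
    have := (Nat.lt_two_pow_self : k < 2 ^ k)
    exact_mod_cast this
  have hk₀n : k₀ ≤ n := by
    have h2 : (2:ℝ)^k₀ ≤ (2:ℝ)^k₀ * u₀ := le_mul_of_one_le_right (by positivity) hu₀1
    have : (k₀:ℝ) < (n:ℝ) := lt_of_lt_of_le (lt_of_lt_of_le (hcast k₀) h2) hnN
    exact_mod_cast this.le
  set k := Nat.findGreatest Q n with hk
  have hQk : Q k := Nat.findGreatest_spec hk₀n hnN
  have hkk₀ : k₀ ≤ k := Nat.le_findGreatest hk₀n hnN
  have hkn : k < n := by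
    have h2 : (2:ℝ)^k ≤ (2:ℝ)^k * u₀ := le_mul_of_one_le_right (by positivity) hu₀1
    have : (k:ℝ) < (n:ℝ) := lt_of_lt_of_le (lt_of_lt_of_le (hcast k) h2) hQk
    exact_mod_cast this
  have hnotQ : ¬ Q (k+1) := Nat.findGreatest_is_greatest (P := Q) (n := n) (by omega) (by omega)
  have hnlt : (n:ℝ) < (2:ℝ)^(k+1) * u₀ := by
    by_contra h
    push_neg at h
    exact hnotQ h
  have hchain : Real.log ((n:ℝ)+1) ≤ ((k:ℝ)+2) * Real.log 2 + Real.log u₀ := by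
    have hlog : Real.log ((n:ℝ)+1) ≤ Real.log ((2:ℝ)^(k+2) * u₀) := by
      apply Real.log_le_log (by positivity)
      have hcast1 : (1:ℝ) ≤ (n:ℝ) := by exact_mod_cast hn1
      calc (n:ℝ)+1 ≤ 2*(n:ℝ) := by linarith
        _ ≤ 2 * ((2:ℝ)^(k+1) * u₀) := by linarith
        _ = (2:ℝ)^(k+2) * u₀ := by ring
    calc Real.log ((n:ℝ)+1) ≤ Real.log ((2:ℝ)^(k+2) * u₀) := hlog
      _ = ((k:ℝ)+2) * Real.log 2 + Real.log u₀ := by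
          rw [Real.log_mul (by positivity) (ne_of_gt hu₀0), Real.log_pow]
          push_cast; ring
  calc M * Real.log ((n:ℝ)+1) ≤ M * (((k:ℝ)+2) * Real.log 2 + Real.log u₀) :=
        mul_le_mul_of_nonneg_left hchain hM
    _ ≤ (5/4:ℝ)^k * ϑ u₀ := hk₀ k hkk₀
    _ ≤ ϑ ((2:ℝ)^k * u₀) := hiter k
    _ ≤ ϑ (n:ℝ) := hϑ_mono (by simp; positivity) (by simp) hQk

lemma a_lower (hϑ_mono : MonotoneOn ϑ (Set.Ici 0))
    (hϑ_concave : ConcaveOn ℝ (Set.Ici 0) ϑ)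
    {a : ℕ → ℝ}
    (ha : ∀ n : ℕ, a n = 1 - Real.exp (-(ϑ (n:ℝ) - ϑ ((n:ℝ) - 1))))
    {u₀ : ℝ} (hu₀1 : 1 ≤ u₀) (hu₀p : 0 < ϑ u₀)
    (hdbl : ∀ u, u₀ ≤ u → (5/4) * ϑ u ≤ ϑ (2 * u)) :
    ∀ᶠ n : ℕ in atTop, ϑ u₀ / 8 / ((n:ℝ)+1) ≤ a (n+1) := by
  have hu₀0 : (0:ℝ) < u₀ := lt_of_lt_of_le one_pos hu₀1
  have hcast : Tendsto (fun n : ℕ => ((n:ℝ)+1)) atTop atTop :=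
    tendsto_atTop_add_const_right _ 1 tendsto_natCast_atTop_atTop
  filter_upwards [hcast.eventually_ge_atTop u₀, hcast.eventually_ge_atTop (ϑ u₀ / 4)]
    with n hn1 hn2
  have hnpos : (0:ℝ) < (n:ℝ) + 1 := by positivity
  -- the increment
  have hslope := hϑ_concave.slope_anti_adjacent
    (x := (n:ℝ)) (y := (n:ℝ)+1) (z := 2*((n:ℝ)+1))
    (by simp) (by simp; positivity) (by linarith) (by linarith)
  have hδ : ϑ u₀ / 4 / ((n:ℝ)+1) ≤ ϑ ((n:ℝ)+1) - ϑ (n:ℝ) := by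
    have hd1 : 2*((n:ℝ)+1) - ((n:ℝ)+1) = (n:ℝ)+1 := by ring
    have hd2 : ((n:ℝ)+1) - (n:ℝ) = 1 := by ring
    rw [hd1, hd2, div_one] at hslope
    have hnum : ϑ u₀ / 4 ≤ ϑ (2*((n:ℝ)+1)) - ϑ ((n:ℝ)+1) := by
      have h1 := hdbl ((n:ℝ)+1) hn1
      have h2 : ϑ u₀ ≤ ϑ ((n:ℝ)+1) := hϑ_mono (by simp [hu₀0.le]) (by simp; positivity) hn1
      linarith
    have hdiv : ϑ u₀ / 4 / ((n:ℝ)+1) ≤ (ϑ (2*((n:ℝ)+1)) - ϑ ((n:ℝ)+1)) / ((n:ℝ)+1) := by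
      gcongr
    linarith
  set m := ϑ u₀ / 4 / ((n:ℝ)+1) with hm
  have hm0 : 0 ≤ m := by rw [hm]; positivity
  have hm1 : m ≤ 1 := by
    rw [hm, div_le_one hnpos]
    exact hn2
  have ha' : a (n+1) = 1 - Real.exp (-(ϑ ((n:ℝ)+1) - ϑ (n:ℝ))) := by
    have h := ha (n+1)
    push_cast at h
    rw [show (n:ℝ)+1-1 = (n:ℝ) by ring] at h
    exact h
  rw [ha']
  have hexp : Real.exp (-(ϑ ((n:ℝ)+1) - ϑ (n:ℝ))) ≤ Real.exp (-m) :=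
    Real.exp_le_exp.mpr (by linarith)
  have hhalf := half_le_one_sub_exp hm0 hm1
  have hfin : ϑ u₀ / 8 / ((n:ℝ)+1) = m / 2 := by rw [hm]; ring
  rw [hfin]
  linarith

end Slow

end CE

namespace CE

lemma len_eq {ϑ : ℝ → ℝ} {a : ℕ → ℝ}
    (ha : ∀ n : ℕ, a n = 1 - Real.exp (-(ϑ (n:ℝ) - ϑ ((n:ℝ) - 1)))) (n : ℕ) :
    len a n = (1/2:ℝ)^n * Real.exp (-(ϑ (n:ℝ) - ϑ 0)) := by
  have hfac : ∀ i : ℕ, (1 - a (i+1))/2 = Real.exp (-(ϑ ((i:ℝ)+1) - ϑ (i:ℝ))) * (1/2) := by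
    intro i
    have h := ha (i+1)
    push_cast at h
    rw [show (i:ℝ)+1-1 = (i:ℝ) by ring] at h
    rw [h]; ring
  rw [len]
  calc (∏ i ∈ Finset.range n, (1 - a (i + 1)) / 2)
      = ∏ i ∈ Finset.range n, (Real.exp (-(ϑ ((i:ℝ)+1) - ϑ (i:ℝ))) * (1/2)) := by
        apply Finset.prod_congr rfl; intro i _; exact hfac i
    _ = (∏ i ∈ Finset.range n, Real.exp (-(ϑ ((i:ℝ)+1) - ϑ (i:ℝ)))) * (1/2:ℝ)^n := by
        rw [Finset.prod_mul_distrib, Finset.prod_const, Finset.card_range]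
    _ = Real.exp (∑ i ∈ Finset.range n, -(ϑ ((i:ℝ)+1) - ϑ (i:ℝ))) * (1/2:ℝ)^n := by
        rw [Real.exp_sum]
    _ = (1/2:ℝ)^n * Real.exp (-(ϑ (n:ℝ) - ϑ 0)) := by
        rw [mul_comm]
        congr 2
        have : ∀ i ∈ Finset.range n, -(ϑ ((i:ℝ)+1) - ϑ (i:ℝ))
            = -((fun j : ℕ => ϑ (j:ℝ)) (i+1) - (fun j : ℕ => ϑ (j:ℝ)) i) := by
          intro i _; push_cast; ring_nf
        have hsum := Finset.sum_range_sub (f := fun j : ℕ => ϑ (j:ℝ)) n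
        rw [Finset.sum_congr rfl this, Finset.sum_neg_distrib, hsum]
        norm_num

lemma log_inv_len {ϑ : ℝ → ℝ} {a : ℕ → ℝ}
    (ha : ∀ n : ℕ, a n = 1 - Real.exp (-(ϑ (n:ℝ) - ϑ ((n:ℝ) - 1)))) (n : ℕ) :
    Real.log (1 / len a n) = n * Real.log 2 + (ϑ (n:ℝ) - ϑ 0) := by
  rw [len_eq ha n, one_div, Real.log_inv, Real.log_mul (by positivity) (by positivity),
    Real.log_pow, Real.log_exp, Real.log_div one_ne_zero two_ne_zero, Real.log_one]
  push_cast
  ring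

end CE

set_option maxHeartbeats 2000000 in
/-- For the uniform measure `μ` on the Cantor set `Ω` built from the gap sequence
`a_n = 1 − e^{−(ϑ(n) − ϑ(n−1))}`, one has
`∫∫_{Ω×Ω} |x−y|^{−1} e^{−α ϑ(log 1/|x−y|)} μ(dx)μ(dy) < ∞` for every `α > (log 2)^{−1/2}`. -/
theorem cantor_measure_energy_finite
    (ϑ : ℝ → ℝ)
    (hϑ_mono : MonotoneOn ϑ (Set.Ici 0))
    (hϑ_concave : ConcaveOn ℝ (Set.Ici 0) ϑ)
    (hϑ_nonneg : ∀ u, 0 ≤ u → 0 ≤ ϑ u)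
    (hϑ_div : ∫⁻ u in Set.Ici (1 : ℝ), ENNReal.ofReal (u ^ (-(3 : ℝ) / 2) * ϑ u) = ⊤)
    (L : ℝ → ℝ)
    (hϑL : ∀ u : ℝ, 1 ≤ u → ϑ u = Real.sqrt u * L u)
    (hL_slow : ∀ c : ℝ, 0 < c → Tendsto (fun u => L (c * u) / L u) atTop (nhds 1))
    (a : ℕ → ℝ)
    (ha : ∀ n : ℕ, a n = 1 - Real.exp (-(ϑ (n : ℝ) - ϑ ((n : ℝ) - 1))))
    (ha01 : ∀ n : ℕ, 1 ≤ n → a n ∈ Set.Ioo (0 : ℝ) 1)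
    (μ : Measure ℝ) [IsProbabilityMeasure μ]
    (hμ : ∀ (n : ℕ) (s : Fin n → Bool), μ (cantorIntv a n s) = (2 : ENNReal)⁻¹ ^ n)
    (α : ℝ) (hα : 1 / Real.sqrt (Real.log 2) < α) :
    ∫⁻ p in (cantorSetOf a) ×ˢ (cantorSetOf a),
        ENNReal.ofReal (|p.1 - p.2|⁻¹ * Real.exp (-α * ϑ (Real.log (1 / |p.1 - p.2|))))
        ∂(μ.prod μ) < ⊤ := by
  classical
  have hOK : CE.OK a := fun k hk => ha01 k hk
  have hlog2 : (0:ℝ) < Real.log 2 := Real.log_pos one_lt_two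
  set β := Real.sqrt (Real.log 2) with hβdef
  have hβ : 0 < β := Real.sqrt_pos.mpr hlog2
  have hα0 : 0 < α := lt_trans (by positivity) hα
  have hαβ : 1 < α * β := by
    rw [div_lt_iff₀ hβ] at hα
    linarith
  set cε : ℝ := (α * β - 1)/2 with hcεdef
  have hcεp : 0 < cε := by rw [hcεdef]; linarith
  obtain ⟨u₀, hu₀1, hu₀p, hdbl⟩ := CE.exists_u0 hϑ_mono hϑ_nonneg hϑL hL_slow
  set c₇ : ℝ := ϑ u₀ / 8 with hc₇def
  have hc₇p : 0 < c₇ := by rw [hc₇def]; positivity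
  have hϑ0 : 0 ≤ ϑ 0 := hϑ_nonneg 0 le_rfl
  -- eventual facts
  have F1 : ∀ᶠ n : ℕ in atTop, (1+cε) * ϑ (n:ℝ) ≤ α * ϑ (Real.log 2 * (n:ℝ)) := by
    have hρ1 : (1+cε)/(α*β) < 1 := by
      rw [div_lt_one (by positivity)]
      rw [hcεdef]; linarith
    have h := CE.theta_ratio hϑ_nonneg hϑL hL_slow (c := Real.log 2) hlog2 hρ1
    filter_upwards [tendsto_natCast_atTop_atTop.eventually h] with n hn
    have harith : α * ((1+cε)/(α*β) * (β * ϑ (n:ℝ))) = (1+cε) * ϑ (n:ℝ) := by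
      field_simp
    calc (1+cε) * ϑ (n:ℝ) = α * ((1+cε)/(α*β) * (β * ϑ (n:ℝ))) := harith.symm
      _ ≤ α * ϑ (Real.log 2 * (n:ℝ)) := mul_le_mul_of_nonneg_left hn hα0.le
  have F2 : ∀ᶠ n : ℕ in atTop, c₇ / ((n:ℝ)+1) ≤ a (n+1) :=
    CE.a_lower hϑ_mono hϑ_concave ha hu₀1 hu₀p hdbl
  have F3 : ∀ᶠ n : ℕ in atTop, (3/cε) * Real.log ((n:ℝ)+1) ≤ ϑ (n:ℝ) :=
    CE.growth hϑ_mono hu₀1 hu₀p hdbl (3/cε) (by positivity)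
  -- definitions
  set D : ℕ → ℝ := fun n => (a (n+1) * CE.len a n)⁻¹
      * Real.exp (-α * ϑ (Real.log (1 / CE.len a n))) with hDdef
  have hDpos : ∀ n, 0 < D n := by
    intro n
    have h1 : 0 < a (n+1) := (ha01 (n+1) (by omega)).1
    have h2 : 0 < CE.len a n := CE.len_pos hOK n
    simp only [hDdef]
    positivity
  set T : ℕ → ℝ := fun n => ((2^n * 2 : ℕ) : ℝ)
      * (D n * ((2⁻¹:ℝ)^(n+1) * (2⁻¹:ℝ)^(n+1))) with hTdef
  have hTpos : ∀ n, 0 < T n := by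
    intro n
    have := hDpos n
    simp only [hTdef]
    positivity
  set ι := (Σ n : ℕ, (Fin n → Bool) × Bool) with hιdef
  set piece : ι → Set (ℝ × ℝ) := fun i =>
    (cantorIntv a (i.1+1) (Fin.snoc i.2.1 i.2.2)) ×ˢ
      (cantorIntv a (i.1+1) (Fin.snoc i.2.1 (!i.2.2))) with hpiecedef
  set cc : ι → ENNReal := fun i => ENNReal.ofReal (D i.1) with hccdef
  have hpiecemeas : ∀ i : ι, MeasurableSet (piece i) := fun i =>
    (CE.measurable_cantorIntv hOK _ _).prod (CE.measurable_cantorIntv hOK _ _)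
  set H : ℝ × ℝ → ENNReal := fun p => ∑' i : ι, (piece i).indicator (fun _ => cc i) p
    with hHdef
  have hΩm : MeasurableSet (cantorSetOf a) := by
    apply MeasurableSet.iInter; intro n
    apply MeasurableSet.iInter; intro hn
    exact MeasurableSet.iUnion (fun s => CE.measurable_cantorIntv hOK n s)
  have hmeas : MeasurableSet ((cantorSetOf a) ×ˢ (cantorSetOf a)) := hΩm.prod hΩm
  -- per-piece bound
  have hbound : ∀ (i : ι) (p : ℝ × ℝ), p ∈ piece i →
      ENNReal.ofReal (|p.1 - p.2|⁻¹ * Real.exp (-α * ϑ (Real.log (1 / |p.1 - p.2|)))) ≤ cc i := by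
    rintro ⟨n, t, b⟩ ⟨x, y⟩ hp
    obtain ⟨hxI, hyI⟩ := hp
    simp only at hxI hyI
    have hparent : (fun i : Fin n => (Fin.snoc t b : Fin (n+1) → Bool) i.castSucc) = t := by
      funext i; simp
    have hparent' : (fun i : Fin n => (Fin.snoc t (!b) : Fin (n+1) → Bool) i.castSucc) = t := by
      funext i; simp
    have hxt : x ∈ cantorIntv a n t := by
      have := CE.parent_subset a hOK n _ hxI
      rwa [hparent] at this
    have hyt : y ∈ cantorIntv a n t := by
      have := CE.parent_subset a hOK n _ hyI
      rwa [hparent'] at this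
    have hlen : |x - y| ≤ CE.len a n := CE.dist_le_len hOK hxt hyt
    have hgap : a (n+1) * CE.len a n ≤ |x - y| := by
      apply CE.gap_lemma a hOK n (Fin.snoc t b) (Fin.snoc t (!b))
        (fun i => by simp) (by simp) x hxI y hyI
    have hlpos : 0 < CE.len a n := CE.len_pos hOK n
    have hapos : 0 < a (n+1) := (ha01 (n+1) (by omega)).1
    have hal : 0 < a (n+1) * CE.len a n := mul_pos hapos hlpos
    have habs : 0 < |x - y| := lt_of_lt_of_le hal hgap
    have hinv : |x - y|⁻¹ ≤ (a (n+1) * CE.len a n)⁻¹ := inv_anti₀ hal hgap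
    have hlog : Real.log (1 / CE.len a n) ≤ Real.log (1 / |x - y|) := by
      apply Real.log_le_log (by positivity)
      exact one_div_le_one_div_of_le habs hlen
    have hlog0 : 0 ≤ Real.log (1 / CE.len a n) := by
      apply Real.log_nonneg
      rw [le_div_iff₀ hlpos, one_mul]
      exact CE.len_le_one hOK n
    have hmono := hϑ_mono (Set.mem_Ici.2 hlog0) (Set.mem_Ici.2 (le_trans hlog0 hlog)) hlog
    have hexp : Real.exp (-α * ϑ (Real.log (1 / |x - y|)))
        ≤ Real.exp (-α * ϑ (Real.log (1 / CE.len a n))) := by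
      apply Real.exp_le_exp.mpr
      nlinarith [hα0.le]
    apply ENNReal.ofReal_le_ofReal
    calc |x - y|⁻¹ * Real.exp (-α * ϑ (Real.log (1 / |x - y|)))
        ≤ (a (n+1) * CE.len a n)⁻¹ * Real.exp (-α * ϑ (Real.log (1 / CE.len a n))) :=
          mul_le_mul hinv hexp (le_of_lt (Real.exp_pos _)) (inv_nonneg.2 hal.le)
      _ = D n := rfl
  -- pointwise domination
  have hFH : ∀ p ∈ (cantorSetOf a) ×ˢ (cantorSetOf a),
      ENNReal.ofReal (|p.1 - p.2|⁻¹ * Real.exp (-α * ϑ (Real.log (1 / |p.1 - p.2|)))) ≤ H p := by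
    rintro ⟨x, y⟩ hp
    obtain ⟨hx, hy⟩ := hp
    rcases eq_or_ne x y with rfl | hne
    · simp
    · obtain ⟨n, t, b, hxI, hyI⟩ := CE.covering hOK hx hy hne
      set i : ι := ⟨n, (t, b)⟩ with hidef
      have hpmem : ((x, y) : ℝ × ℝ) ∈ piece i := ⟨hxI, hyI⟩
      calc ENNReal.ofReal (|(x, y).1 - (x, y).2|⁻¹
            * Real.exp (-α * ϑ (Real.log (1 / |(x, y).1 - (x, y).2|))))
          ≤ cc i := hbound i (x, y) hpmem
        _ = (piece i).indicator (fun _ => cc i) (x, y) :=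
            (Set.indicator_of_mem hpmem (fun _ => cc i)).symm
        _ ≤ H (x, y) := ENNReal.le_tsum i
  -- the chain of integral bounds
  have key : (∫⁻ p in (cantorSetOf a) ×ˢ (cantorSetOf a),
      ENNReal.ofReal (|p.1 - p.2|⁻¹ * Real.exp (-α * ϑ (Real.log (1 / |p.1 - p.2|))))
      ∂(μ.prod μ)) ≤ ∑' n : ℕ, ENNReal.ofReal (T n) := by
    have step1 : (∫⁻ p in (cantorSetOf a) ×ˢ (cantorSetOf a),
        ENNReal.ofReal (|p.1 - p.2|⁻¹ * Real.exp (-α * ϑ (Real.log (1 / |p.1 - p.2|))))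
        ∂(μ.prod μ)) ≤ ∫⁻ p in (cantorSetOf a) ×ˢ (cantorSetOf a), H p ∂(μ.prod μ) :=
      lintegral_mono_ae ((ae_restrict_iff' hmeas).2 (Filter.Eventually.of_forall hFH))
    have step2 : (∫⁻ p in (cantorSetOf a) ×ˢ (cantorSetOf a), H p ∂(μ.prod μ))
        ≤ ∫⁻ p, H p ∂(μ.prod μ) := lintegral_mono' Measure.restrict_le_self le_rfl
    have step3 : (∫⁻ p, H p ∂(μ.prod μ)) = ∑' i : ι, cc i * (μ.prod μ) (piece i) := by
      simp only [hHdef]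
      rw [lintegral_tsum (fun i => (measurable_const.indicator (hpiecemeas i)).aemeasurable)]
      exact tsum_congr (fun i => lintegral_indicator_const (hpiecemeas i) (cc i))
    have step4 : ∀ i : ι, (μ.prod μ) (piece i)
        = (2 : ENNReal)⁻¹^(i.1+1) * (2 : ENNReal)⁻¹^(i.1+1) := by
      rintro ⟨n, t, b⟩
      simp only [hpiecedef]
      rw [Measure.prod_prod, hμ (n+1), hμ (n+1)]
    have step5 : ∑' i : ι, cc i * (μ.prod μ) (piece i) = ∑' n : ℕ, ENNReal.ofReal (T n) := by
      have hterm : ∀ i : ι, cc i * (μ.prod μ) (piece i)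
          = ENNReal.ofReal (D i.1 * ((2⁻¹:ℝ)^(i.1+1) * (2⁻¹:ℝ)^(i.1+1))) := by
        intro i
        rw [step4 i]
        simp only [hccdef]
        have h2inv : (2 : ENNReal)⁻¹ = ENNReal.ofReal ((2:ℝ)⁻¹) := by
          rw [ENNReal.ofReal_inv_of_pos two_pos, ENNReal.ofReal_ofNat]
        rw [h2inv, ← ENNReal.ofReal_pow (by norm_num), ← ENNReal.ofReal_mul (by positivity),
          ← ENNReal.ofReal_mul (hDpos i.1).le]
      rw [tsum_congr hterm, ENNReal.tsum_sigma']
      apply tsum_congr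
      intro n
      have hmid : (∑' (_q : (Fin n → Bool) × Bool),
          ENNReal.ofReal (D n * ((2⁻¹:ℝ)^(n+1) * (2⁻¹:ℝ)^(n+1))))
          = ENNReal.ofReal (T n) := by
        rw [tsum_fintype, Finset.sum_const]
        have hcard : (Finset.univ : Finset ((Fin n → Bool) × Bool)).card = 2^n * 2 := by
          simp [Finset.card_univ]
        rw [hcard, nsmul_eq_mul, hTdef]
        rw [← ENNReal.ofReal_natCast (2^n * 2), ← ENNReal.ofReal_mul (by positivity)]
      exact hmid
    calc (∫⁻ p in (cantorSetOf a) ×ˢ (cantorSetOf a),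
        ENNReal.ofReal (|p.1 - p.2|⁻¹ * Real.exp (-α * ϑ (Real.log (1 / |p.1 - p.2|))))
        ∂(μ.prod μ)) ≤ ∫⁻ p, H p ∂(μ.prod μ) := le_trans step1 step2
      _ = ∑' n : ℕ, ENNReal.ofReal (T n) := by rw [step3, step5]
  -- summability of T
  have hsummable : Summable T := by
    obtain ⟨N, hN⟩ := eventually_atTop.mp ((F1.and F2).and F3)
    have hTle : ∀ n, N ≤ n → T n ≤ (1/c₇) * (((n:ℝ)+1)^2)⁻¹ := by
      intro n hn
      obtain ⟨⟨h1, h2⟩, h3⟩ := hN n hn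
      have hnpos : (0:ℝ) < (n:ℝ)+1 := by positivity
      have hlpos : 0 < CE.len a n := CE.len_pos hOK n
      have hapos : 0 < a (n+1) := (ha01 (n+1) (by omega)).1
      have hloglen : Real.log (1 / CE.len a n) = n * Real.log 2 + (ϑ (n:ℝ) - ϑ 0) :=
        CE.log_inv_len ha n
      have hϑn0 : ϑ 0 ≤ ϑ (n:ℝ) := hϑ_mono (by simp) (by simp) (by positivity)
      have hlog2n : Real.log 2 * (n:ℝ) ≤ Real.log (1 / CE.len a n) := by
        rw [hloglen]; nlinarith
      have hlog2n0 : (0:ℝ) ≤ Real.log 2 * (n:ℝ) := by positivity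
      have hmono2 := hϑ_mono (Set.mem_Ici.2 hlog2n0)
        (Set.mem_Ici.2 (le_trans hlog2n0 hlog2n)) hlog2n
      have hexp1 : (1+cε) * ϑ (n:ℝ) ≤ α * ϑ (Real.log (1 / CE.len a n)) := by
        calc (1+cε) * ϑ (n:ℝ) ≤ α * ϑ (Real.log 2 * (n:ℝ)) := h1
          _ ≤ α * ϑ (Real.log (1 / CE.len a n)) := mul_le_mul_of_nonneg_left hmono2 hα0.le
      have hainv : (a (n+1))⁻¹ ≤ ((n:ℝ)+1)/c₇ := by
        have h2' := inv_anti₀ (by positivity : (0:ℝ) < c₇ / ((n:ℝ)+1)) h2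
        rwa [inv_div] at h2'
      have hleninv : (CE.len a n)⁻¹ = (2:ℝ)^n * Real.exp (ϑ (n:ℝ) - ϑ 0) := by
        rw [CE.len_eq ha n, mul_inv, ← Real.exp_neg, neg_neg, one_div, inv_pow, inv_inv]
      have hTeq : T n = ((a (n+1))⁻¹ * (1/2)) * (Real.exp (ϑ (n:ℝ) - ϑ 0)
          * Real.exp (-α * ϑ (Real.log (1 / CE.len a n)))) := by
        simp only [hTdef, hDdef]
        rw [mul_inv, hleninv]
        push_cast
        have hne : ((2:ℝ)^n) ≠ 0 := by positivity
        field_simp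
        ring_nf
        rw [← mul_pow]
        norm_num
      have hX : (a (n+1))⁻¹ * (1/2) ≤ ((n:ℝ)+1)/c₇ := by
        have hinv0 : (0:ℝ) ≤ (a (n+1))⁻¹ := inv_nonneg.2 hapos.le
        linarith
      have hexp3 : Real.exp (-(3:ℝ) * Real.log ((n:ℝ)+1)) = (((n:ℝ)+1)^3)⁻¹ := by
        rw [show -(3:ℝ) * Real.log ((n:ℝ)+1) = -Real.log (((n:ℝ)+1)^3) by
          rw [Real.log_pow]; push_cast; ring]
        rw [Real.exp_neg, Real.exp_log (by positivity)]
      have hY : Real.exp (ϑ (n:ℝ) - ϑ 0) * Real.exp (-α * ϑ (Real.log (1 / CE.len a n)))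
          ≤ (((n:ℝ)+1)^3)⁻¹ := by
        rw [← Real.exp_add, ← hexp3]
        apply Real.exp_le_exp.mpr
        have h3' : 3 * Real.log ((n:ℝ)+1) ≤ cε * ϑ (n:ℝ) := by
          calc 3 * Real.log ((n:ℝ)+1) = cε * ((3/cε) * Real.log ((n:ℝ)+1)) := by
                field_simp
            _ ≤ cε * ϑ (n:ℝ) := mul_le_mul_of_nonneg_left h3 hcεp.le
        nlinarith
      calc T n = ((a (n+1))⁻¹ * (1/2)) * (Real.exp (ϑ (n:ℝ) - ϑ 0)
            * Real.exp (-α * ϑ (Real.log (1 / CE.len a n)))) := hTeq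
        _ ≤ (((n:ℝ)+1)/c₇) * (((n:ℝ)+1)^3)⁻¹ := by
            apply mul_le_mul hX hY (by positivity) (by positivity)
        _ = (1/c₇) * (((n:ℝ)+1)^2)⁻¹ := by
            field_simp
    have hg : Summable (fun n : ℕ => (1/c₇) * (((n:ℝ)+1)^2)⁻¹) := by
      apply Summable.mul_left
      have h := summable_one_div_nat_pow.mpr (show 1 < 2 by norm_num)
      have h2 := (summable_nat_add_iff 1).mpr h
      apply h2.congr
      intro n
      push_cast
      rw [one_div]
    apply (summable_nat_add_iff N).1
    apply Summable.of_nonneg_of_le (fun n => (hTpos (n+N)).le)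
      (fun n => hTle (n+N) (by omega))
    exact (summable_nat_add_iff N).2 hg
  calc (∫⁻ p in (cantorSetOf a) ×ˢ (cantorSetOf a),
      ENNReal.ofReal (|p.1 - p.2|⁻¹ * Real.exp (-α * ϑ (Real.log (1 / |p.1 - p.2|))))
      ∂(μ.prod μ)) ≤ ∑' n : ℕ, ENNReal.ofReal (T n) := key
    _ = ENNReal.ofReal (∑' n, T n) :=
        (ENNReal.ofReal_tsum_of_nonneg (fun n => (hTpos n).le) hsummable).symm
    _ < ⊤ := ENNReal.ofReal_lt_top
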